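/- For the four-dimensional perfect-fluid system with γ ∈ (1,2) and C₂ > 0, the point (Σ,A,K,v) = (0,0,1,0) is an equilibrium of the system Σ' , A', K', v' (equations (3.29) with Ωₜ substituted from the constraint), and its linearization has eigenvalues {-2, -1, 1, 2}; since eigenvalues of both signs occur, it is a hyperbolic saddle. -/

import Mathlib

noncomputable section

def Omt (γ C₂ S A K v : ℝ) : ℝ :=
  ((γ - 1) * v ^ 2 + 1) * (1 - C₂ * S ^ 2 - C₂ * A ^ 2 - K) / (γ + v ^ 2 - 1)

def sqrt3r (γ C₂ S A K v : ℝ) : ℝ :=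
  S * (2 * C₂ * S + 1) + γ * Omt γ C₂ S A K v * v ^ 2 / ((γ - 1) * v ^ 2 + 1) + K

/-- The θ-normalized four-dimensional perfect-fluid vector field (equations (3.29)
with Ωₜ substituted from the constraint), in the variables `(Σ, A, K, v)`. -/
def Ffield (γ C₂ : ℝ) : ℝ × ℝ × ℝ × ℝ → ℝ × ℝ × ℝ × ℝ := fun p =>
  let S := p.1; let A := p.2.1; let K := p.2.2.1; let v := p.2.2.2
  (-S * (S - sqrt3r γ C₂ S A K v + 2) +
      Omt γ C₂ S A K v * (-3 * γ + (γ - 2) * v ^ 2 + 2) /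
        (2 * C₂ * ((γ - 1) * v ^ 2 + 1)),
   A * (S + sqrt3r γ C₂ S A K v),
   2 * K * (-S + sqrt3r γ C₂ S A K v - 1),
   (v ^ 2 - 1) / (γ * (γ - v ^ 2 - 1)) *
     (γ * v * (γ * S + 2 * γ - 2) + A * ((γ - 1) * (3 * γ - 2) + (γ - 2) * v ^ 2)))

lemma ffield_diffN1 (γ C₂ : ℝ) (hγ₁ : 1 < γ) (hC : 0 < C₂) :
    DifferentiableAt ℝ (Ffield γ C₂) (((0:ℝ), (0:ℝ), (1:ℝ), (0:ℝ))) := by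
  unfold Ffield sqrt3r Omt
  simp only [div_eq_mul_inv]
  fun_prop (disch := (exact ne_of_gt (by norm_num <;> nlinarith)))

lemma eigen_of_line (γ C₂ : ℝ)
    (hdiff : DifferentiableAt ℝ (Ffield γ C₂) (((0:ℝ), (0:ℝ), (1:ℝ), (0:ℝ))))
    (w D : ℝ × ℝ × ℝ × ℝ) (lam : ℝ) (hD : D = lam • w) (hw : w ≠ 0)
    (hG : HasDerivAt (fun t : ℝ =>
        Ffield γ C₂ ((((0:ℝ), (0:ℝ), (1:ℝ), (0:ℝ)) : ℝ × ℝ × ℝ × ℝ) + t • w)) D 0) :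
    Module.End.HasEigenvalue
      ((fderiv ℝ (Ffield γ C₂) (0, 0, 1, 0)).toLinearMap) lam := by
  have hl : HasDerivAt
      (fun t : ℝ => (((0:ℝ), (0:ℝ), (1:ℝ), (0:ℝ)) : ℝ × ℝ × ℝ × ℝ) + t • w) w 0 := by
    simpa using (hasDerivAt_id' (x := (0:ℝ))).smul_const w
      |>.const_add ((((0:ℝ), (0:ℝ), (1:ℝ), (0:ℝ)) : ℝ × ℝ × ℝ × ℝ))
  have hc : HasDerivAt (fun t : ℝ =>
      Ffield γ C₂ ((((0:ℝ), (0:ℝ), (1:ℝ), (0:ℝ)) : ℝ × ℝ × ℝ × ℝ) + t • w))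
      ((fderiv ℝ (Ffield γ C₂) (0, 0, 1, 0)) w) 0 := by
    exact hdiff.hasFDerivAt.comp_hasDerivAt_of_eq (0:ℝ) hl (by norm_num)
  have key : (fderiv ℝ (Ffield γ C₂) (0, 0, 1, 0)) w = lam • w := by
    rw [← hD]; exact hc.unique hG
  exact Module.End.hasEigenvalue_of_hasEigenvector
    ⟨Module.End.mem_eigenspace_iff.mpr (by simpa using key), hw⟩

/-- For `γ ∈ (1,2)` and `C₂ > 0`, the point `(Σ, A, K, v) = (0, 0, 1, 0)` is an
equilibrium whose linearization has eigenvalues `{-2, -1, 1, 2}`; eigenvalues of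
both signs occur, so it is a hyperbolic saddle. -/
theorem N1_hyperbolic_saddle (γ C₂ : ℝ) (hγ₁ : 1 < γ) (hγ₂ : γ < 2) (hC : 0 < C₂) :
    Ffield γ C₂ (0, 0, 1, 0) = 0 ∧
    Module.End.HasEigenvalue ((fderiv ℝ (Ffield γ C₂) (0, 0, 1, 0)).toLinearMap) (-2) ∧
    Module.End.HasEigenvalue ((fderiv ℝ (Ffield γ C₂) (0, 0, 1, 0)).toLinearMap) (-1) ∧
    Module.End.HasEigenvalue ((fderiv ℝ (Ffield γ C₂) (0, 0, 1, 0)).toLinearMap) 1 ∧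
    Module.End.HasEigenvalue ((fderiv ℝ (Ffield γ C₂) (0, 0, 1, 0)).toLinearMap) 2 ∧
    (-2 : ℝ) < 0 ∧ (0 : ℝ) < 1 := by
  -- proof

  have hγ0 : (0:ℝ) < γ := by linarith
  have hγ1' : γ - 1 ≠ 0 := by intro h; linarith
  have hγne : γ ≠ 0 := ne_of_gt hγ0
  have hCne : C₂ ≠ 0 := ne_of_gt hC
  have hdiff := ffield_diffN1 γ C₂ hγ₁ hC
  have hid := hasDerivAt_id' (x := (0:ℝ))
  have hsq : HasDerivAt (fun t : ℝ => t ^ 2) 0 0 := by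
    simpa using hasDerivAt_pow 2 (0:ℝ)
  have hcube : HasDerivAt (fun t : ℝ => t ^ 3) 0 0 := by
    simpa using hasDerivAt_pow 3 (0:ℝ)
  refine ⟨by norm_num [Ffield, Omt, sqrt3r, Prod.ext_iff], ?_, ?_, ?_, ?_, by norm_num, by norm_num⟩
  · -- eigenvalue -2, eigenvector (0,0,0,1)
    refine eigen_of_line γ C₂ hdiff (0, 0, 0, 1) (0, 0, 0, -2) (-2)
      (by norm_num [Prod.ext_iff]) (by simp [Prod.ext_iff]) ?_
    have harg : ∀ t : ℝ, (((0:ℝ), (0:ℝ), (1:ℝ), (0:ℝ)) : ℝ × ℝ × ℝ × ℝ)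
        + t • (((0:ℝ), (0:ℝ), (0:ℝ), (1:ℝ)) : ℝ × ℝ × ℝ × ℝ) = (0, 0, 1, t) := by
      intro t; norm_num [Prod.ext_iff]
    simp only [harg]
    have hEq : (fun t : ℝ => Ffield γ C₂ (0, 0, 1, t)) = fun t : ℝ =>
        (((0:ℝ), (0:ℝ), (0:ℝ),
          (t ^ 2 - 1) * (γ * t * (2 * γ - 2)) / (γ * (γ - t ^ 2 - 1))) : ℝ × ℝ × ℝ × ℝ) := by
      funext t
      simp only [Ffield, Omt, sqrt3r, Prod.mk.injEq]
      refine ⟨by ring, by ring, by ring, by ring⟩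
    rw [hEq]
    have hD : γ * (γ - (0:ℝ) ^ 2 - 1) ≠ 0 := ne_of_gt (by norm_num; nlinarith)
    have hN : HasDerivAt (fun t : ℝ => (t ^ 2 - 1) * (γ * t * (2 * γ - 2)))
        (0 * (γ * 0 * (2 * γ - 2)) + ((0:ℝ) ^ 2 - 1) * (γ * 1 * (2 * γ - 2))) 0 :=
      (hsq.sub_const 1).mul ((hid.const_mul γ).mul_const (2 * γ - 2))
    have hDen : HasDerivAt (fun t : ℝ => γ * (γ - t ^ 2 - 1)) (γ * (0 - 0)) 0 :=
      (((hasDerivAt_const (0:ℝ) γ).sub hsq).sub_const 1).const_mul γ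
    have h4 := hN.div hDen hD
    have h4' : HasDerivAt (fun t : ℝ =>
        (t ^ 2 - 1) * (γ * t * (2 * γ - 2)) / (γ * (γ - t ^ 2 - 1))) (-2) 0 := by
      refine h4.congr_deriv ?_
      norm_num
      field_simp
    exact ((hasDerivAt_const (0:ℝ) (0:ℝ)).prodMk ((hasDerivAt_const (0:ℝ) (0:ℝ)).prodMk
      ((hasDerivAt_const (0:ℝ) (0:ℝ)).prodMk h4')))
  · -- eigenvalue -1, eigenvector (1,0,0,0)
    refine eigen_of_line γ C₂ hdiff (1, 0, 0, 0) (-1, 0, 0, 0) (-1)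
      (by norm_num [Prod.ext_iff]) (by simp [Prod.ext_iff]) ?_
    have harg : ∀ t : ℝ, (((0:ℝ), (0:ℝ), (1:ℝ), (0:ℝ)) : ℝ × ℝ × ℝ × ℝ)
        + t • (((1:ℝ), (0:ℝ), (0:ℝ), (0:ℝ)) : ℝ × ℝ × ℝ × ℝ) = (t, 0, 1, 0) := by
      intro t; norm_num [Prod.ext_iff]
    simp only [harg]
    have hEq : (fun t : ℝ => Ffield γ C₂ (t, 0, 1, 0)) = fun t : ℝ =>
        ((-t + 2 * C₂ * t ^ 3 + -(C₂ * t ^ 2) / (γ - 1) * ((2 - 3 * γ) / (2 * C₂)),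
          (0:ℝ), 4 * C₂ * t ^ 2, (0:ℝ)) : ℝ × ℝ × ℝ × ℝ) := by
      funext t
      simp only [Ffield, Omt, sqrt3r, Prod.mk.injEq]
      refine ⟨by ring, by ring, by ring, by ring⟩
    rw [hEq]
    have h1 : HasDerivAt (fun t : ℝ =>
        -t + 2 * C₂ * t ^ 3 + -(C₂ * t ^ 2) / (γ - 1) * ((2 - 3 * γ) / (2 * C₂))) (-1) 0 := by
      have := (hid.neg.add (hcube.const_mul (2 * C₂))).add
        ((((hsq.const_mul C₂).neg).div_const (γ - 1)).mul_const ((2 - 3 * γ) / (2 * C₂)))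
      refine this.congr_deriv ?_
      norm_num
    have h3 : HasDerivAt (fun t : ℝ => 4 * C₂ * t ^ 2) 0 0 := by
      simpa using hsq.const_mul (4 * C₂)
    exact h1.prodMk ((hasDerivAt_const (0:ℝ) (0:ℝ)).prodMk
      (h3.prodMk (hasDerivAt_const (0:ℝ) (0:ℝ))))
  · -- eigenvalue 1, eigenvector (0,1,0,c), c = -((3γ-2)/(3γ))
    set c : ℝ := -((3 * γ - 2) / (3 * γ)) with hc_def
    refine eigen_of_line γ C₂ hdiff (0, 1, 0, c) (0, 1, 0, c) 1
      (by norm_num [Prod.ext_iff]) (by simp [Prod.ext_iff]) ?_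
    have harg : ∀ t : ℝ, (((0:ℝ), (0:ℝ), (1:ℝ), (0:ℝ)) : ℝ × ℝ × ℝ × ℝ)
        + t • (((0:ℝ), (1:ℝ), (0:ℝ), c) : ℝ × ℝ × ℝ × ℝ) = (0, t, 1, c * t) := by
      intro t; norm_num [Prod.ext_iff]; ring
    simp only [harg]
    have hca : ∀ t : ℝ, HasDerivAt (fun t : ℝ => (c * t) ^ 2) (2 * (c * t) ^ 1 * (c * 1)) t :=
      fun t => ((hasDerivAt_id' (x := t)).const_mul c).pow 2
    have hcsq : HasDerivAt (fun t : ℝ => (c * t) ^ 2) (2 * (c * 0) ^ 1 * (c * 1)) 0 := hca 0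
    -- pieces
    have ha : HasDerivAt (fun t : ℝ => (γ - 1) * (c * t) ^ 2 + 1)
        ((γ - 1) * (2 * (c * 0) ^ 1 * (c * 1))) 0 := (hcsq.const_mul (γ - 1)).add_const 1
    have hb : HasDerivAt (fun t : ℝ => -(C₂ * t ^ 2)) (-(C₂ * 0)) 0 := (hsq.const_mul C₂).neg
    have hd1 : HasDerivAt (fun t : ℝ => γ + (c * t) ^ 2 - 1)
        (2 * (c * 0) ^ 1 * (c * 1)) 0 := by
      simpa using (hcsq.const_add γ).sub_const 1
    have hd1ne : γ + (c * (0:ℝ)) ^ 2 - 1 ≠ 0 := ne_of_gt (by norm_num; linarith)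
    have hane : (γ - 1) * (c * (0:ℝ)) ^ 2 + 1 ≠ 0 := by norm_num
    -- Omt along the line
    have hOm : HasDerivAt (fun t : ℝ =>
        ((γ - 1) * (c * t) ^ 2 + 1) * -(C₂ * t ^ 2) / (γ + (c * t) ^ 2 - 1))
        0 0 := by
      have := (ha.mul hb).div hd1 hd1ne
      refine this.congr_deriv ?_
      norm_num
    -- T = γ * Omt * (c t)^2 / ((γ-1)(c t)^2 + 1)
    have hT : HasDerivAt (fun t : ℝ =>
        γ * (((γ - 1) * (c * t) ^ 2 + 1) * -(C₂ * t ^ 2) / (γ + (c * t) ^ 2 - 1)) * (c * t) ^ 2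
          / ((γ - 1) * (c * t) ^ 2 + 1)) 0 0 := by
      have := (((hOm.const_mul γ).mul hcsq).div ha hane)
      refine this.congr_deriv ?_
      norm_num
    -- component 1
    have h1 : HasDerivAt (fun t : ℝ =>
        ((γ - 1) * (c * t) ^ 2 + 1) * -(C₂ * t ^ 2) / (γ + (c * t) ^ 2 - 1)
          * (-3 * γ + (γ - 2) * (c * t) ^ 2 + 2) / (2 * C₂ * ((γ - 1) * (c * t) ^ 2 + 1)))
        0 0 := by
      have hx : HasDerivAt (fun t : ℝ => -3 * γ + (γ - 2) * (c * t) ^ 2 + 2)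
          ((γ - 2) * (2 * (c * 0) ^ 1 * (c * 1))) 0 := by
        simpa using ((hcsq.const_mul (γ - 2)).const_add (-3 * γ)).add_const 2
      have hd2 : HasDerivAt (fun t : ℝ => 2 * C₂ * ((γ - 1) * (c * t) ^ 2 + 1))
          (2 * C₂ * ((γ - 1) * (2 * (c * 0) ^ 1 * (c * 1)))) 0 := ha.const_mul (2 * C₂)
      have hd2ne : 2 * C₂ * ((γ - 1) * (c * (0:ℝ)) ^ 2 + 1) ≠ 0 := ne_of_gt (by norm_num; positivity)
      have := (hOm.mul hx).div hd2 hd2ne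
      refine this.congr_deriv ?_
      norm_num
    -- component 2
    have h2 : HasDerivAt (fun t : ℝ =>
        t * (γ * (((γ - 1) * (c * t) ^ 2 + 1) * -(C₂ * t ^ 2) / (γ + (c * t) ^ 2 - 1))
          * (c * t) ^ 2 / ((γ - 1) * (c * t) ^ 2 + 1) + 1)) 1 0 := by
      have := hid.mul (hT.add_const 1)
      refine this.congr_deriv ?_
      norm_num
    -- component 3
    have h3 : HasDerivAt (fun t : ℝ =>
        2 * (γ * (((γ - 1) * (c * t) ^ 2 + 1) * -(C₂ * t ^ 2) / (γ + (c * t) ^ 2 - 1))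
          * (c * t) ^ 2 / ((γ - 1) * (c * t) ^ 2 + 1))) 0 0 := by
      have := hT.const_mul 2
      refine this.congr_deriv ?_
      norm_num
    -- component 4
    have h4 : HasDerivAt (fun t : ℝ =>
        ((c * t) ^ 2 - 1) * (γ * (c * t) * (γ * 0 + 2 * γ - 2)
          + t * ((γ - 1) * (3 * γ - 2) + (γ - 2) * (c * t) ^ 2))
          / (γ * (γ - (c * t) ^ 2 - 1))) c 0 := by
      have hNa : HasDerivAt (fun t : ℝ => γ * (c * t) * (γ * 0 + 2 * γ - 2))
          (γ * (c * 1) * (γ * 0 + 2 * γ - 2)) 0 := by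
        exact ((hid.const_mul c).const_mul γ).mul_const (γ * 0 + 2 * γ - 2)
      have hNb : HasDerivAt (fun t : ℝ => t * ((γ - 1) * (3 * γ - 2) + (γ - 2) * (c * t) ^ 2))
          (1 * ((γ - 1) * (3 * γ - 2) + (γ - 2) * (c * 0) ^ 2)
            + 0 * ((γ - 2) * (2 * (c * 0) ^ 1 * (c * 1)))) 0 := by
        exact hid.mul ((hcsq.const_mul (γ - 2)).const_add ((γ - 1) * (3 * γ - 2)))
      have hN := (hcsq.sub_const 1).mul (hNa.add hNb)
      have hDen : HasDerivAt (fun t : ℝ => γ * (γ - (c * t) ^ 2 - 1))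
          (γ * (0 - 2 * (c * 0) ^ 1 * (c * 1) - 0)) 0 := by
        simpa using (((hasDerivAt_const (0:ℝ) γ).sub hcsq).sub_const 1).const_mul γ
      have hDne : γ * (γ - (c * (0:ℝ)) ^ 2 - 1) ≠ 0 := ne_of_gt (by norm_num; nlinarith)
      have := hN.div hDen hDne
      refine this.congr_deriv ?_
      rw [hc_def]
      norm_num
      field_simp
      ring
    have hEq : (fun t : ℝ => Ffield γ C₂ (0, t, 1, c * t)) = fun t : ℝ =>
        ((((γ - 1) * (c * t) ^ 2 + 1) * -(C₂ * t ^ 2) / (γ + (c * t) ^ 2 - 1)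
            * (-3 * γ + (γ - 2) * (c * t) ^ 2 + 2) / (2 * C₂ * ((γ - 1) * (c * t) ^ 2 + 1)),
          t * (γ * (((γ - 1) * (c * t) ^ 2 + 1) * -(C₂ * t ^ 2) / (γ + (c * t) ^ 2 - 1))
            * (c * t) ^ 2 / ((γ - 1) * (c * t) ^ 2 + 1) + 1),
          2 * (γ * (((γ - 1) * (c * t) ^ 2 + 1) * -(C₂ * t ^ 2) / (γ + (c * t) ^ 2 - 1))
            * (c * t) ^ 2 / ((γ - 1) * (c * t) ^ 2 + 1)),
          ((c * t) ^ 2 - 1) * (γ * (c * t) * (γ * 0 + 2 * γ - 2)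
            + t * ((γ - 1) * (3 * γ - 2) + (γ - 2) * (c * t) ^ 2))
            / (γ * (γ - (c * t) ^ 2 - 1))) : ℝ × ℝ × ℝ × ℝ) := by
      funext t
      simp only [Ffield, Omt, sqrt3r, Prod.mk.injEq]
      refine ⟨by ring, by ring, by ring, by ring⟩
    rw [hEq]
    exact h1.prodMk (h2.prodMk (h3.prodMk h4))
  · -- eigenvalue 2, eigenvector (s,0,1,0), s = (3γ-2)/(6C₂(γ-1))
    set s : ℝ := (3 * γ - 2) / (6 * C₂ * (γ - 1)) with hs_def
    refine eigen_of_line γ C₂ hdiff (s, 0, 1, 0) (2 * s, 0, 2, 0) 2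
      (by norm_num [Prod.ext_iff]) (by simp [Prod.ext_iff]) ?_
    have harg : ∀ t : ℝ, (((0:ℝ), (0:ℝ), (1:ℝ), (0:ℝ)) : ℝ × ℝ × ℝ × ℝ)
        + t • ((s, (0:ℝ), (1:ℝ), (0:ℝ)) : ℝ × ℝ × ℝ × ℝ) = (s * t, 0, 1 + t, 0) := by
      intro t; norm_num [Prod.ext_iff]; ring
    simp only [harg]
    have hEq : (fun t : ℝ => Ffield γ C₂ (s * t, 0, 1 + t, 0)) = fun t : ℝ =>
        ((-(s * t) * (1 - t - 2 * C₂ * s ^ 2 * t ^ 2)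
            + (-t - C₂ * s ^ 2 * t ^ 2) / (γ - 1) * ((2 - 3 * γ) / (2 * C₂)),
          (0:ℝ),
          2 * (1 + t) * (t + 2 * C₂ * s ^ 2 * t ^ 2),
          (0:ℝ)) : ℝ × ℝ × ℝ × ℝ) := by
      funext t
      simp only [Ffield, Omt, sqrt3r, Prod.mk.injEq]
      refine ⟨by ring, by ring, by ring, by ring⟩
    rw [hEq]
    have h1 : HasDerivAt (fun t : ℝ =>
        -(s * t) * (1 - t - 2 * C₂ * s ^ 2 * t ^ 2)
          + (-t - C₂ * s ^ 2 * t ^ 2) / (γ - 1) * ((2 - 3 * γ) / (2 * C₂))) (2 * s) 0 := by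
      have hf : HasDerivAt (fun t : ℝ => -(s * t)) (-(s * 1)) 0 := (hid.const_mul s).neg
      have hg : HasDerivAt (fun t : ℝ => 1 - t - 2 * C₂ * s ^ 2 * t ^ 2)
          (0 - 1 - 2 * C₂ * s ^ 2 * 0) 0 := by
        exact (((hasDerivAt_const (0:ℝ) (1:ℝ)).sub hid).sub
          (by simpa using hsq.const_mul (2 * C₂ * s ^ 2)))
      have hq : HasDerivAt (fun t : ℝ =>
          (-t - C₂ * s ^ 2 * t ^ 2) / (γ - 1) * ((2 - 3 * γ) / (2 * C₂)))
          ((-1 - C₂ * s ^ 2 * 0) / (γ - 1) * ((2 - 3 * γ) / (2 * C₂))) 0 := by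
        exact (((hid.neg.sub (by simpa using hsq.const_mul (C₂ * s ^ 2))).div_const
          (γ - 1)).mul_const ((2 - 3 * γ) / (2 * C₂)))
      have := (hf.mul hg).add hq
      refine this.congr_deriv ?_
      rw [hs_def]
      field_simp
      ring
    have h3 : HasDerivAt (fun t : ℝ => 2 * (1 + t) * (t + 2 * C₂ * s ^ 2 * t ^ 2)) 2 0 := by
      have hf : HasDerivAt (fun t : ℝ => 2 * (1 + t)) (2 * 1) 0 := by
        simpa using (hid.const_add (1:ℝ)).const_mul 2
      have hg : HasDerivAt (fun t : ℝ => t + 2 * C₂ * s ^ 2 * t ^ 2)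
          (1 + 2 * C₂ * s ^ 2 * 0) 0 := hid.add (by simpa using hsq.const_mul (2 * C₂ * s ^ 2))
      have := hf.mul hg
      refine this.congr_deriv ?_
      norm_num
    exact h1.prodMk ((hasDerivAt_const (0:ℝ) (0:ℝ)).prodMk
      (h3.prodMk (hasDerivAt_const (0:ℝ) (0:ℝ))))
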